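/- A topological space X is nowhere scattered (meaning: no nonempty closed subset of X has an isolated point in its subspace topology) if and only if X contains no nonempty, scattered, locally closed subset. -/
import Mathlib


/-- `x` is an isolated point of the subset `S` (in the subspace topology). -/
def IsolatedIn {X : Type*} [TopologicalSpace X] (S : Set X) (x : X) : Prop :=
  x ∈ S ∧ ∃ U : Set X, IsOpen U ∧ U ∩ S = {x}

/-- A space is nowhere scattered if no nonempty closed subset has an isolated point. -/
def NowhereScatteredSpace (X : Type*) [TopologicalSpace X] : Prop :=
  ∀ C : Set X, IsClosed C → ∀ x : X, ¬ IsolatedIn C x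

/-- A subset `S` is scattered if every nonempty subset of it contains a point
isolated in its subspace topology. -/
def ScatteredSet {X : Type*} [TopologicalSpace X] (S : Set X) : Prop :=
  ∀ T : Set X, T ⊆ S → T.Nonempty → ∃ x : X, IsolatedIn T x

theorem stmt1 {X : Type*} [TopologicalSpace X] :
    NowhereScatteredSpace X ↔
      ¬ ∃ S : Set X, S.Nonempty ∧ ScatteredSet S ∧ IsLocallyClosed S := by
  constructor
  · rintro h ⟨S, hSne, hSc, U, Z, hU, hZ, hSUZ⟩
    obtain ⟨x, hxS, V, hV, hVS⟩ := hSc S le_rfl hSne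
    refine h (closure S) isClosed_closure x ⟨subset_closure hxS, V ∩ U, hV.inter hU, ?_⟩
    apply Set.Subset.antisymm
    · intro y ⟨⟨hyV, hyU⟩, hycl⟩
      have hyZ : y ∈ Z := (closure_minimal (by rw [hSUZ]; exact Set.inter_subset_right) hZ) hycl
      have : y ∈ V ∩ S := ⟨hyV, by rw [hSUZ]; exact ⟨hyU, hyZ⟩⟩
      rwa [hVS] at this
    · intro y hy
      rw [Set.mem_singleton_iff] at hy
      rw [hy]
      have hxV : x ∈ V ∩ S := by rw [hVS]; rfl
      exact ⟨⟨hxV.1, by rw [hSUZ] at hxS; exact hxS.1⟩, subset_closure hxS⟩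
  · rintro h C hC x ⟨hxC, U, hU, hUC⟩
    apply h
    have hxU : x ∈ U := by
      have : x ∈ U ∩ C := by rw [hUC]; rfl
      exact this.1
    refine ⟨{x}, ⟨x, rfl⟩, ?_, U, C, hU, hC, hUC.symm⟩
    intro T hT ⟨y, hy⟩
    have hyx : y = x := hT hy
    subst hyx
    have hTy : T = {y} := Set.Subset.antisymm hT (by rintro z rfl; exact hy)
    exact ⟨y, hy, U, hU, by rw [hTy, Set.inter_eq_right.mpr (Set.singleton_subset_iff.mpr hxU)]⟩
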